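/- Suppose K ≥ 2 and an M×N real matrix Φ satisfies the RIP of order 3K with isometry constant δ ≤ 0.13/√(log₂ K). Let x ∈ ℝ^N with ‖x‖₀ ≤ K and y = Φx. Consider any run of Regularized Orthogonal Matching Pursuit: Λ⁰ = ∅, and for each iteration ℓ, with x^ℓ the minimizer of ‖y − Φz‖₂ over z supported on Λ^ℓ, r^ℓ = y − Φx^ℓ, and h^ℓ = Φᵀr^ℓ (the algorithm stops when r^ℓ = 0): Ω^ℓ is a set of indices corresponding to the K largest-magnitude entries of h^ℓ (i.e., |Ω^ℓ| = K and |h^ℓ(i)| ≥ |h^ℓ(j)| for all i ∈ Ω^ℓ and j ∉ Ω^ℓ), or Ω^ℓ = supp(h^ℓ) if h^ℓ has fewer than K nonzero entries; Ω₀^ℓ is a subset of Ω^ℓ satisfying |h^ℓ(i)| ≤ 2|h^ℓ(j)| for all i, j ∈ Ω₀^ℓ which maximizes ‖h^ℓ|_Ω‖₂ among all such regularized subsets Ω ⊆ Ω^ℓ; and Λ^{ℓ+1} = Λ^ℓ ∪ Ω₀^ℓ. Then ROMP recovers x exactly from y in at most K iterations: there exists ℓ ≤ K such that supp(x) ⊆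 Λ^ℓ and the least-squares estimate x^ℓ equals x. -/

import Mathlib

noncomputable section

namespace OMP

open Matrix Finset

/-- The support of a vector, as a `Finset`. -/
def supp {n : ℕ} (x : Fin n → ℝ) : Finset (Fin n) :=
  Finset.univ.filter fun j => x j ≠ 0

/-- The Euclidean (ℓ²) norm of a vector. -/
def l2 {n : ℕ} (x : Fin n → ℝ) : ℝ := Real.sqrt (∑ j, x j ^ 2)

/-- The ℓ^∞ norm of a vector. -/
def linf {n : ℕ} (x : Fin n → ℝ) : ℝ := ⨆ j, |x j|

/-- The standard inner product of two vectors. -/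
def dotp {n : ℕ} (x y : Fin n → ℝ) : ℝ := ∑ j, x j * y j

/-- The restriction of a vector to a set of indices (zero elsewhere). -/
def restr {n : ℕ} (Γ : Finset (Fin n)) (x : Fin n → ℝ) : Fin n → ℝ :=
  fun j => if j ∈ Γ then x j else 0

/-- The restricted isometry property of order `K` with isometry constant `δ`. -/
def RIP {M N : ℕ} (K : ℕ) (Φ : Matrix (Fin M) (Fin N) ℝ) (δ : ℝ) : Prop :=
  0 < δ ∧ δ < 1 ∧ ∀ x : Fin N → ℝ, (supp x).card ≤ K →
    (1 - δ) * l2 x ^ 2 ≤ l2 (Φ.mulVec x) ^ 2 ∧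
      l2 (Φ.mulVec x) ^ 2 ≤ (1 + δ) * l2 x ^ 2

/-- The span of the columns of `Φ` indexed by `Λ`, as a submodule of Euclidean space. -/
def colSpan {M N : ℕ} (Φ : Matrix (Fin M) (Fin N) ℝ) (Λ : Finset (Fin N)) :
    Submodule ℝ (EuclideanSpace ℝ (Fin M)) :=
  Submodule.span ℝ ((fun j => (WithLp.equiv 2 (Fin M → ℝ)).symm fun i => Φ i j) '' (Λ : Set (Fin N)))

/-- Orthogonal projection `P_Λ` onto the span of the columns of `Φ` indexed by `Λ`. -/
def projCol {M N : ℕ} (Φ : Matrix (Fin M) (Fin N) ℝ) (Λ : Finset (Fin N))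
    (v : Fin M → ℝ) : Fin M → ℝ :=
  WithLp.equiv 2 (Fin M → ℝ)
    (Submodule.orthogonalProjectionOnto (colSpan Φ Λ) ((WithLp.equiv 2 (Fin M → ℝ)).symm v) : EuclideanSpace ℝ (Fin M))

/-- The matrix `A_Λ = (I - P_Λ) Φ`: the columns of `Φ` orthogonalized against `colSpan Φ Λ`. -/
def Amat {M N : ℕ} (Φ : Matrix (Fin M) (Fin N) ℝ) (Λ : Finset (Fin N)) :
    Matrix (Fin M) (Fin N) ℝ :=
  Matrix.of fun i j => Φ i j - projCol Φ Λ (fun i' => Φ i' j) i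

lemma l2_sq {n : ℕ} (x : Fin n → ℝ) : l2 x ^ 2 = ∑ j, x j ^ 2 :=
  Real.sq_sqrt (Finset.sum_nonneg fun j _ => sq_nonneg _)

lemma l2_nonneg {n : ℕ} (x : Fin n → ℝ) : 0 ≤ l2 x := Real.sqrt_nonneg _

lemma mem_supp {n : ℕ} {x : Fin n → ℝ} {j : Fin n} : j ∈ supp x ↔ x j ≠ 0 := by
  simp [supp]

lemma l2_restr_sq {n : ℕ} (Γ : Finset (Fin n)) (x : Fin n → ℝ) :
    l2 (restr Γ x) ^ 2 = ∑ j ∈ Γ, x j ^ 2 := by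
  rw [l2_sq]
  rw [← Finset.sum_filter_add_sum_filter_not Finset.univ (· ∈ Γ)]
  have h1 : ∀ j ∈ Finset.univ.filter (· ∈ Γ), restr Γ x j ^ 2 = x j ^ 2 := by
    intro j hj; simp at hj; simp [restr, hj]
  have h2 : ∀ j ∈ Finset.univ.filter (¬ · ∈ Γ), restr Γ x j ^ 2 = 0 := by
    intro j hj; simp at hj; simp [restr, hj]
  rw [Finset.sum_congr rfl h1, Finset.sum_congr rfl h2, Finset.sum_const_zero, add_zero]
  congr 1
  ext j; simp

lemma supp_sub_union {n : ℕ} (a b : Fin n → ℝ) : supp (a - b) ⊆ supp a ∪ supp b := by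
  intro j hj
  simp only [mem_supp, Pi.sub_apply] at hj
  simp only [Finset.mem_union, mem_supp]
  by_contra hc
  push_neg at hc
  simp [hc.1, hc.2] at hj

lemma supp_add_union {n : ℕ} (a b : Fin n → ℝ) : supp (a + b) ⊆ supp a ∪ supp b := by
  intro j hj
  simp only [mem_supp, Pi.add_apply] at hj
  simp only [Finset.mem_union, mem_supp]
  by_contra hc
  push_neg at hc
  simp [hc.1, hc.2] at hj

lemma dotp_transpose {M N : ℕ} (Φ : Matrix (Fin M) (Fin N) ℝ) (u : Fin N → ℝ) (w : Fin M → ℝ) :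
    dotp u (Φᵀ.mulVec w) = dotp (Φ.mulVec u) w := by
  simp only [dotp, Matrix.mulVec, Matrix.transpose_apply, dotProduct]
  simp only [Finset.mul_sum, Finset.sum_mul]
  rw [Finset.sum_comm]
  apply Finset.sum_congr rfl; intro i _
  apply Finset.sum_congr rfl; intro j _
  ring

-- quadratic minimization
lemma quad_zero {c d : ℝ} (h : ∀ t : ℝ, 0 ≤ t^2*d - 2*t*c) : c = 0 := by
  by_contra hc
  rcases le_or_gt d 0 with hd | hd
  · rcases lt_or_gt_of_ne hc with h1 | h1
    · have := h (-1); nlinarith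
    · have := h 1; nlinarith
  · have := h (c/d)
    have : 0 ≤ (c/d)^2*d - 2*(c/d)*c := this
    have hc2 : 0 < c^2 := by positivity
    have hq : (c/d)^2*d - 2*(c/d)*c = -(c^2/d) := by field_simp; ring
    rw [hq] at this
    have : c^2/d > 0 := by positivity
    linarith

lemma scale_sq {c V δ : ℝ} (hc : 0 ≤ c) (hV : 0 ≤ V) (hδ : 0 ≤ δ)
    (h : ∀ s : ℝ, 0 < s → s * c ≤ δ * (s^2 * c + V) / 2) : c ≤ δ^2 * V := by
  rcases eq_or_lt_of_le hc with hc0 | hc0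
  · nlinarith
  rcases eq_or_lt_of_le hV with hV0 | hV0
  · -- V = 0
    exfalso
    rcases eq_or_lt_of_le hδ with hδ0 | hδ0
    · have := h 1 one_pos; nlinarith
    · have := h (1/δ) (by positivity)
      rw [← hV0] at this
      have h2 : (1/δ) * c ≤ δ * ((1/δ)^2 * c) / 2 := by linarith
      have h3 : δ * ((1/δ)^2 * c) / 2 = c / δ / 2 := by field_simp
      rw [h3] at h2
      have : c/δ ≤ c/δ/2 := by
        calc c/δ = (1/δ)*c := by ring
        _ ≤ c/δ/2 := h2
      have hcd : 0 < c/δ := by positivity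
      linarith
  · have hs : 0 < Real.sqrt (V/c) := Real.sqrt_pos.2 (by positivity)
    have := h _ hs
    have hsq : Real.sqrt (V/c) ^ 2 = V/c := Real.sq_sqrt (by positivity)
    rw [hsq] at this
    have h2 : Real.sqrt (V/c) * c ≤ δ * V := by
      have : V/c*c = V := by field_simp
      nlinarith [this]
    have h3 : Real.sqrt (V/c) * c = Real.sqrt (V*c) := by
      rw [show V*c = (V/c)*c^2 by field_simp, Real.sqrt_mul (by positivity),
        Real.sqrt_sq hc]
    rw [h3] at h2
    have h4 : Real.sqrt (V*c)^2 ≤ (δ*V)^2 := by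
      apply sq_le_sq' _ h2
      nlinarith [Real.sqrt_nonneg (V*c)]
    rw [Real.sq_sqrt (by positivity)] at h4
    nlinarith

-- Cauchy-Schwarz / triangle for restricted sums
lemma sum_sq_triangle {n : ℕ} (Γ : Finset (Fin n)) (f g : Fin n → ℝ) :
    ∑ j ∈ Γ, (f j + g j)^2 ≤
      (Real.sqrt (∑ j ∈ Γ, f j ^2) + Real.sqrt (∑ j ∈ Γ, g j ^2))^2 := by
  have hcs : (∑ j ∈ Γ, f j * g j)^2 ≤ (∑ j ∈ Γ, f j^2) * (∑ j ∈ Γ, g j^2) :=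
    Finset.sum_mul_sq_le_sq_mul_sq Γ f g
  have hf : 0 ≤ ∑ j ∈ Γ, f j^2 := Finset.sum_nonneg fun j _ => sq_nonneg _
  have hg : 0 ≤ ∑ j ∈ Γ, g j^2 := Finset.sum_nonneg fun j _ => sq_nonneg _
  have h1 : ∑ j ∈ Γ, f j * g j ≤ Real.sqrt (∑ j ∈ Γ, f j^2) * Real.sqrt (∑ j ∈ Γ, g j^2) := by
    have h2 : Real.sqrt ((∑ j ∈ Γ, f j * g j)^2) ≤
        Real.sqrt ((∑ j ∈ Γ, f j^2) * (∑ j ∈ Γ, g j^2)) := Real.sqrt_le_sqrt hcs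
    rw [Real.sqrt_mul hf] at h2
    calc ∑ j ∈ Γ, f j * g j ≤ |∑ j ∈ Γ, f j * g j| := le_abs_self _
    _ = Real.sqrt ((∑ j ∈ Γ, f j * g j)^2) := (Real.sqrt_sq_eq_abs _).symm
    _ ≤ _ := h2
  have hexp : ∑ j ∈ Γ, (f j + g j)^2 = (∑ j ∈ Γ, f j^2) + 2*(∑ j ∈ Γ, f j * g j) + (∑ j ∈ Γ, g j^2) := by
    rw [Finset.mul_sum, ← Finset.sum_add_distrib, ← Finset.sum_add_distrib]
    apply Finset.sum_congr rfl; intro j _; ring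
  rw [hexp]
  have hf2 := Real.sq_sqrt hf
  have hg2 := Real.sq_sqrt hg
  nlinarith

lemma sum_diff_sq {M : ℕ} (a b : Fin M → ℝ) :
    (∑ i, (a i + b i)^2) - (∑ i, (a i - b i)^2) = 4 * ∑ i, a i * b i := by
  rw [Finset.mul_sum, ← Finset.sum_sub_distrib]
  apply Finset.sum_congr rfl; intro i _; ring

lemma key_bound {M N K : ℕ} {Φ : Matrix (Fin M) (Fin N) ℝ} {δ : ℝ}
    (hRIP : RIP (3*K) Φ δ) (v : Fin N → ℝ) (T : Finset (Fin N))
    (hcard : (T ∪ supp v).card ≤ 3*K) :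
    ∑ j ∈ T, ((Φᵀ.mulVec (Φ.mulVec v)) j - v j)^2 ≤ δ^2 * ∑ j, v j^2 := by
  classical
  obtain ⟨hδ0, hδ1, hrip⟩ := hRIP
  set h : Fin N → ℝ := Φᵀ.mulVec (Φ.mulVec v) with hh
  set c : ℝ := ∑ j ∈ T, (h j - v j)^2 with hc
  set V : ℝ := ∑ j, v j ^2 with hV
  have hcn : 0 ≤ c := Finset.sum_nonneg fun j _ => sq_nonneg _
  have hVn : 0 ≤ V := Finset.sum_nonneg fun j _ => sq_nonneg _
  apply scale_sq hcn hVn hδ0.le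
  intro s hs
  set w : Fin N → ℝ := fun j => if j ∈ T then s * (h j - v j) else 0 with hw
  have hsuppw : supp w ⊆ T := by
    intro j hj
    rw [mem_supp] at hj
    by_contra hjT
    simp [hw, hjT] at hj
  have hsupp1 : (supp (w + v)).card ≤ 3*K := by
    refine le_trans (Finset.card_le_card ?_) hcard
    refine (supp_add_union w v).trans (Finset.union_subset_union hsuppw (subset_refl _))
  have hsupp2 : (supp (w - v)).card ≤ 3*K := by
    refine le_trans (Finset.card_le_card ?_) hcard
    refine (supp_sub_union w v).trans (Finset.union_subset_union hsuppw (subset_refl _))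
  have h1 := (hrip (w + v) hsupp1).2
  have h2 := (hrip (w - v) hsupp2).1
  -- sums of squares
  have hww : ∑ j, w j ^2 = s^2 * c := by
    rw [hc, Finset.mul_sum]
    rw [← Finset.sum_filter_add_sum_filter_not Finset.univ (· ∈ T) (fun j => w j ^2)]
    have e1 : ∀ j ∈ Finset.univ.filter (· ∈ T), w j ^2 = s^2*(h j - v j)^2 := by
      intro j hj; simp at hj; simp only [hw]; rw [if_pos hj]; ring
    have e2 : ∀ j ∈ Finset.univ.filter (¬ · ∈ T), w j ^2 = 0 := by
      intro j hj; simp at hj; simp [hw, hj]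
    rw [Finset.sum_congr rfl e1, Finset.sum_congr rfl e2, Finset.sum_const_zero, add_zero]
    rw [show Finset.univ.filter (· ∈ T) = T by ext j; simp]
  have hwhv : dotp w h - dotp w v = s * c := by
    rw [dotp, dotp, ← Finset.sum_sub_distrib, hc, Finset.mul_sum]
    rw [← Finset.sum_filter_add_sum_filter_not Finset.univ (· ∈ T)
      (fun j => w j * h j - w j * v j)]
    have e1 : ∀ j ∈ Finset.univ.filter (· ∈ T), w j * h j - w j * v j = s*(h j - v j)^2 := by
      intro j hj; simp at hj; simp only [hw]; rw [if_pos hj]; ring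
    have e2 : ∀ j ∈ Finset.univ.filter (¬ · ∈ T), w j * h j - w j * v j = 0 := by
      intro j hj; simp at hj; simp [hw, hj]
    rw [Finset.sum_congr rfl e1, Finset.sum_congr rfl e2, Finset.sum_const_zero, add_zero]
    rw [show Finset.univ.filter (· ∈ T) = T by ext j; simp]
  have hPhi : dotp (Φ.mulVec w) (Φ.mulVec v) = dotp w h := (dotp_transpose Φ w (Φ.mulVec v)).symm
  -- expand l2 squares
  have hl2p : l2 (w + v)^2 = s^2*c + V + 2 * dotp w v := by
    rw [l2_sq, ← hww]
    simp only [dotp, hV, Pi.add_apply, Finset.mul_sum]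
    rw [← Finset.sum_add_distrib, ← Finset.sum_add_distrib]
    apply Finset.sum_congr rfl; intro j _; ring
  have hl2m : l2 (w - v)^2 = s^2*c + V - 2 * dotp w v := by
    rw [l2_sq, ← hww]
    simp only [dotp, hV, Pi.sub_apply, Finset.mul_sum]
    have expand : ∑ j, (w j - v j)^2 = ∑ j, ((w j^2 + v j^2) - 2*(w j * v j)) :=
      Finset.sum_congr rfl fun j _ => by ring
    rw [expand, Finset.sum_sub_distrib, Finset.sum_add_distrib]
  -- expand mulVec terms
  have hImagePlus : l2 (Φ.mulVec (w+v))^2 - l2 (Φ.mulVec (w-v))^2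
      = 4 * dotp (Φ.mulVec w) (Φ.mulVec v) := by
    rw [l2_sq, l2_sq, Matrix.mulVec_add, Matrix.mulVec_sub]
    simp only [dotp, Pi.add_apply, Pi.sub_apply]
    exact sum_diff_sq (Φ.mulVec w) (Φ.mulVec v)
  rw [hl2p] at h1
  rw [hl2m] at h2
  rw [hPhi] at hImagePlus
  nlinarith [h1, h2, hImagePlus, hwhv]

lemma sum_biUnion_le' {n : ℕ} (s : Finset ℕ) (f : Fin n → ℝ) (hf : ∀ i, 0 ≤ f i) :
    ∀ (T : ℕ → Finset (Fin n)), ∑ i ∈ s.biUnion T, f i ≤ ∑ k ∈ s, ∑ i ∈ T k, f i := by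
  classical
  induction s using Finset.induction with
  | empty => simp
  | @insert a s h ih =>
    intro T
    rw [Finset.biUnion_insert, Finset.sum_insert h]
    have h1 := Finset.sum_union_inter (s₁ := T a) (s₂ := s.biUnion T) (f := f)
    have h2 : 0 ≤ ∑ i ∈ T a ∩ s.biUnion T, f i := Finset.sum_nonneg fun i _ => hf i
    have := ih T
    linarith

lemma bucket {n K : ℕ} (hK : 2 ≤ K) (u : Fin n → ℝ) (Ω : Finset (Fin n))
    (hcard : Ω.card ≤ K) :
    ∃ B ⊆ Ω, (∀ i ∈ B, ∀ j ∈ B, |u i| ≤ 2 * |u j|) ∧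
      0.3 / Real.logb 2 K * ∑ i ∈ Ω, u i^2 ≤ ∑ i ∈ B, u i^2 := by
  classical
  set L := Real.logb 2 K with hLdef
  have hL : 1 ≤ L := by
    rw [hLdef, show (1:ℝ) = Real.logb 2 2 from (Real.logb_self_eq_one (by norm_num)).symm]
    apply Real.logb_le_logb_of_le (by norm_num) (by norm_num)
    exact_mod_cast hK
  have hL0 : 0 < L := lt_of_lt_of_le one_pos hL
  set E := ∑ i ∈ Ω, u i^2 with hEdef
  have hEnn : 0 ≤ E := Finset.sum_nonneg fun i _ => sq_nonneg _
  rcases eq_or_lt_of_le hEnn with hE0 | hE0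
  · exact ⟨∅, Finset.empty_subset _, by simp, by rw [← hE0]; simp⟩
  -- Ω nonempty, get max
  have hΩne : Ω.Nonempty := by
    by_contra hc
    rw [Finset.not_nonempty_iff_eq_empty] at hc
    rw [hEdef, hc] at hE0; simp at hE0
  obtain ⟨i₀, hi₀Ω, hi₀⟩ := Finset.exists_max_image Ω (fun i => |u i|) hΩne
  set A := |u i₀| with hAdef
  have hAnn : 0 ≤ A := abs_nonneg _
  have hAE : A^2 ≤ E := by
    rw [hAdef, sq_abs]
    exact Finset.single_le_sum (fun i _ => sq_nonneg (u i)) hi₀Ω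
  have hA0 : 0 < A := by
    rcases eq_or_lt_of_le hAnn with h0 | h0
    · exfalso
      have : E ≤ 0 := by
        rw [hEdef]
        apply Finset.sum_nonpos
        intro i hi
        have h1 := hi₀ i hi
        rw [← h0] at h1
        nlinarith [sq_abs (u i), abs_nonneg (u i)]
      linarith
    · exact h0
  have hEK : E ≤ K * A^2 := by
    calc E ≤ Ω.card • A^2 := Finset.sum_le_card_nsmul Ω _ _ (fun i hi => by
            rw [← sq_abs]; exact pow_le_pow_left₀ (abs_nonneg _) (hi₀ i hi) 2)
    _ = (Ω.card : ℝ) * A^2 := by rw [nsmul_eq_mul]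
    _ ≤ K * A^2 := by
        apply mul_le_mul_of_nonneg_right _ (sq_nonneg _)
        exact_mod_cast hcard
  set m := ⌈Real.logb 4 (4*K*A^2/E)⌉₊ with hmdef
  have hargpos : (0:ℝ) < 4*K*A^2/E := by positivity
  have harg4 : (4:ℝ) ≤ 4*K*A^2/E := by
    rw [le_div_iff₀ hE0]
    nlinarith
  have hlog1 : (1:ℝ) ≤ Real.logb 4 (4*K*A^2/E) := by
    calc (1:ℝ) = Real.logb 4 4 := (Real.logb_self_eq_one (by norm_num)).symm
    _ ≤ _ := Real.logb_le_logb_of_le (by norm_num) (by norm_num) harg4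
  have hm1 : 1 ≤ m := by
    rw [hmdef]
    exact Nat.one_le_ceil_iff.2 (lt_of_lt_of_le one_pos hlog1)
  have hm0 : (0:ℝ) < m := by exact_mod_cast hm1
  have hm4 : 4*K*A^2/E ≤ (4:ℝ)^m := by
    have h1 : Real.logb 4 (4*K*A^2/E) ≤ (m:ℝ) := Nat.le_ceil _
    have h2 := (Real.logb_le_iff_le_rpow (by norm_num) hargpos).1 h1
    rwa [Real.rpow_natCast] at h2
  have hmL : (m:ℝ) ≤ 2.5 * L := by
    have h1 : (m:ℝ) < Real.logb 4 (4*K*A^2/E) + 1 :=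
      Nat.ceil_lt_add_one (le_trans zero_le_one hlog1)
    have h2 : Real.logb 4 (4*K*A^2/E) ≤ Real.logb 4 (4*K) := by
      apply Real.logb_le_logb_of_le (by norm_num) hargpos
      rw [div_le_iff₀ hE0]
      nlinarith
    have h3 : Real.logb 4 (4*(K:ℝ)) = 1 + L / 2 := by
      have hlog2 : Real.log 2 ≠ 0 := ne_of_gt (Real.log_pos (by norm_num))
      have h4 : Real.log 4 = 2 * Real.log 2 := by
        rw [show (4:ℝ) = 2^2 by norm_num, Real.log_pow]; push_cast; ring
      rw [hLdef]
      simp only [Real.logb]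
      rw [Real.log_mul (by norm_num) (by positivity), h4]
      field_simp
    linarith
  -- buckets
  set B : ℕ → Finset (Fin n) :=
    fun k => Ω.filter (fun i => A/2^(k+1) ≤ |u i| ∧ |u i| ≤ A/2^k) with hBdef
  set Ωbig := Ω.filter (fun i => A/2^m ≤ |u i|) with hObig
  have cover : Ωbig ⊆ (Finset.range m).biUnion B := by
    intro i hi
    rw [hObig, Finset.mem_filter] at hi
    obtain ⟨hiΩ, hibig⟩ := hi
    have hex : ∃ k, A/2^k ≤ |u i| := ⟨m, hibig⟩
    have hk1m : Nat.find hex ≤ m := Nat.find_le hibig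
    have hspec : A/2^(Nat.find hex) ≤ |u i| := Nat.find_spec hex
    rw [Finset.mem_biUnion]
    rcases Nat.eq_zero_or_pos (Nat.find hex) with h0 | hpos
    · refine ⟨0, Finset.mem_range.2 hm1, ?_⟩
      rw [hBdef, Finset.mem_filter]
      rw [h0, pow_zero, div_one] at hspec
      have e1 : A/2^(0+1) ≤ |u i| := by
        have e2 : A/2^(0+1) ≤ A := by
          rw [zero_add, pow_one]
          linarith
        linarith
      have e3 : |u i| ≤ A/2^0 := by
        rw [pow_zero, div_one]; exact hi₀ i hiΩ
      exact ⟨hiΩ, e1, e3⟩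
    · refine ⟨Nat.find hex - 1, Finset.mem_range.2 (by omega), ?_⟩
      rw [hBdef, Finset.mem_filter]
      have hmin := Nat.find_min hex (show Nat.find hex - 1 < Nat.find hex by omega)
      push_neg at hmin
      rw [show Nat.find hex - 1 + 1 = Nat.find hex by omega]
      exact ⟨hiΩ, hspec, hmin.le⟩
  have hsmall : ∑ i ∈ Ω \ Ωbig, u i^2 ≤ E/4 := by
    have hbd : ∀ i ∈ Ω \ Ωbig, u i^2 ≤ E/(4*K) := by
      intro i hi
      rw [Finset.mem_sdiff, hObig, Finset.mem_filter] at hi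
      have h5 : ¬ (A/2^m ≤ |u i|) := fun hc => hi.2 ⟨hi.1, hc⟩
      push_neg at h5
      have h6 : u i^2 ≤ (A/2^m)^2 := by
        rw [← sq_abs]
        exact pow_le_pow_left₀ (abs_nonneg _) h5.le 2
      have h7 : (A/2^m)^2 = A^2/4^m := by
        rw [div_pow]; congr 1; rw [← pow_mul, mul_comm m 2, pow_mul]; norm_num
      have h8 : A^2/4^m ≤ E/(4*K) := by
        rw [div_le_div_iff₀ (by positivity) (by positivity)]
        have h9 := (div_le_iff₀ hE0).1 hm4
        nlinarith [pow_pos (show (0:ℝ) < 4 by norm_num) m]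
      linarith
    calc ∑ i ∈ Ω \ Ωbig, u i^2 ≤ (Ω \ Ωbig).card • (E/(4*K)) :=
        Finset.sum_le_card_nsmul _ _ _ hbd
    _ = ((Ω \ Ωbig).card : ℝ) * (E/(4*K)) := by rw [nsmul_eq_mul]
    _ ≤ K * (E/(4*K)) := by
        apply mul_le_mul_of_nonneg_right _ (by positivity)
        have : (Ω \ Ωbig).card ≤ Ω.card := Finset.card_le_card (Finset.sdiff_subset)
        exact_mod_cast le_trans this hcard
    _ = E/4 := by field_simp
  have hbig : 3/4*E ≤ ∑ i ∈ Ωbig, u i^2 := by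
    have := Finset.sum_sdiff (show Ωbig ⊆ Ω from Finset.filter_subset _ _) (f := fun i => u i^2)
    rw [hEdef]
    linarith [this]
  have hsum : ∑ i ∈ Ωbig, u i^2 ≤ ∑ k ∈ Finset.range m, ∑ i ∈ B k, u i^2 := by
    calc ∑ i ∈ Ωbig, u i^2 ≤ ∑ i ∈ (Finset.range m).biUnion B, u i^2 :=
        Finset.sum_le_sum_of_subset_of_nonneg cover (fun i _ _ => sq_nonneg _)
    _ ≤ _ := sum_biUnion_le' _ _ (fun i => sq_nonneg _) B
  -- pigeonhole
  obtain ⟨k, hk, hkb⟩ := Finset.exists_le_of_sum_le (f := fun _ => 3/4*E/(m:ℝ))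
    (g := fun k => ∑ i ∈ B k, u i^2) (s := Finset.range m)
    (by rw [Finset.nonempty_range_iff]; omega)
    (by
      rw [Finset.sum_const, Finset.card_range, nsmul_eq_mul]
      rw [show (m:ℝ) * (3/4*E/(m:ℝ)) = 3/4*E by field_simp]
      linarith)
  refine ⟨B k, Finset.filter_subset _ _, ?_, ?_⟩
  · intro i hi j hj
    rw [hBdef, Finset.mem_filter] at hi hj
    calc |u i| ≤ A/2^k := hi.2.2
    _ = 2 * (A/2^(k+1)) := by rw [pow_succ]; ring
    _ ≤ 2 * |u j| := by linarith [hj.2.1]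
  · have hfrac : 0.3/L ≤ 3/4/(m:ℝ) := by
      rw [div_le_div_iff₀ hL0 hm0]
      linarith
    calc 0.3/L * E ≤ 3/4/(m:ℝ) * E := mul_le_mul_of_nonneg_right hfrac hEnn
    _ = 3/4*E/(m:ℝ) := by ring
    _ ≤ ∑ i ∈ B k, u i^2 := hkb

lemma topK_sum {n : ℕ} (h : Fin n → ℝ) (Ωs T : Finset (Fin n))
    (hcard : T.card ≤ Ωs.card) (hmax : ∀ i ∈ Ωs, ∀ j ∉ Ωs, |h j| ≤ |h i|) :
    ∑ j ∈ T, h j^2 ≤ ∑ j ∈ Ωs, h j^2 := by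
  classical
  have e1 := Finset.sum_inter_add_sum_sdiff T Ωs (fun j => h j^2)
  have e2 := Finset.sum_inter_add_sum_sdiff Ωs T (fun j => h j^2)
  have einter : T ∩ Ωs = Ωs ∩ T := Finset.inter_comm _ _
  have hcards : (T \ Ωs).card ≤ (Ωs \ T).card := by
    have c1 := Finset.card_inter_add_card_sdiff T Ωs
    have c2 := Finset.card_inter_add_card_sdiff Ωs T
    have : (T ∩ Ωs).card = (Ωs ∩ T).card := by rw [einter]
    omega
  have key : ∑ j ∈ T \ Ωs, h j^2 ≤ ∑ j ∈ Ωs \ T, h j^2 := by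
    rcases Finset.eq_empty_or_nonempty (T \ Ωs) with he | hne
    · rw [he, Finset.sum_empty]
      exact Finset.sum_nonneg fun j _ => sq_nonneg _
    · have hOTne : (Ωs \ T).Nonempty := by
        rw [← Finset.card_pos] at hne ⊢
        omega
      obtain ⟨i₀, hi₀mem, hi₀min⟩ := Finset.exists_min_image (Ωs \ T) (fun i => |h i|) hOTne
      have hi₀Ω : i₀ ∈ Ωs := (Finset.mem_sdiff.1 hi₀mem).1
      calc ∑ j ∈ T \ Ωs, h j^2 ≤ (T \ Ωs).card • (h i₀^2) := by
            apply Finset.sum_le_card_nsmul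
            intro j hj
            have hjn : j ∉ Ωs := (Finset.mem_sdiff.1 hj).2
            have := hmax i₀ hi₀Ω j hjn
            rw [← sq_abs (h j), ← sq_abs (h i₀)]
            exact pow_le_pow_left₀ (abs_nonneg _) this 2
      _ ≤ (Ωs \ T).card • (h i₀^2) := by
            apply nsmul_le_nsmul_left (sq_nonneg _) hcards
      _ ≤ ∑ j ∈ Ωs \ T, h j^2 := by
            apply Finset.card_nsmul_le_sum
            intro i hi
            have := hi₀min i hi
            rw [← sq_abs (h i), ← sq_abs (h i₀)]
            exact pow_le_pow_left₀ (abs_nonneg _) this 2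
  calc ∑ j ∈ T, h j^2 = ∑ j ∈ T ∩ Ωs, h j^2 + ∑ j ∈ T \ Ωs, h j^2 := e1.symm
  _ ≤ ∑ j ∈ Ωs ∩ T, h j^2 + ∑ j ∈ Ωs \ T, h j^2 := by rw [einter] at e1 ⊢; linarith
  _ = ∑ j ∈ Ωs, h j^2 := e2

lemma ls_orth {M N : ℕ} (Φ : Matrix (Fin M) (Fin N) ℝ) (y : Fin M → ℝ)
    (Λ : Finset (Fin N)) (xs : Fin N → ℝ) (hxs : supp xs ⊆ Λ)
    (hmin : ∀ z, supp z ⊆ Λ → l2 (y - Φ.mulVec xs) ≤ l2 (y - Φ.mulVec z)) :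
    ∀ j ∈ Λ, Φᵀ.mulVec (y - Φ.mulVec xs) j = 0 := by
  classical
  intro j hj
  set r := y - Φ.mulVec xs with hr
  have hcval : Φᵀ.mulVec r j = ∑ i, Φ i j * r i := by
    simp only [Matrix.mulVec, Matrix.transpose_apply, dotProduct]
  rw [hcval]
  set c := ∑ i, Φ i j * r i with hc
  apply quad_zero (d := ∑ i, (Φ i j)^2)
  intro t
  set e : Fin N → ℝ := fun k => if k = j then t else 0 with he
  set z := xs + e with hz
  have hsuppz : supp z ⊆ Λ := by
    refine (supp_add_union xs e).trans ?_
    apply Finset.union_subset hxs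
    intro k hk
    rw [mem_supp] at hk
    have : k = j := by by_contra hc'; simp [he, hc'] at hk
    rwa [this]
  have hPhie : Φ.mulVec e = fun i => t * Φ i j := by
    funext i
    simp only [Matrix.mulVec, dotProduct, he]
    rw [Finset.sum_eq_single j]
    · simp [mul_comm]
    · intro k _ hk; simp [hk]
    · intro hk; simp at hk
  have hmz := hmin z hsuppz
  have hyz : y - Φ.mulVec z = fun i => r i - t * Φ i j := by
    funext i
    rw [hz, Matrix.mulVec_add, hPhie, hr]
    simp [Pi.sub_apply, Pi.add_apply]
    ring
  have hsq : l2 r ^2 ≤ l2 (y - Φ.mulVec z) ^2 :=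
    pow_le_pow_left₀ (l2_nonneg _) hmz 2
  rw [l2_sq, l2_sq, hyz] at hsq
  have hexp : ∑ i, (r i - t * Φ i j)^2
      = ∑ i, r i ^2 + (t^2 * ∑ i, (Φ i j)^2 - 2*t*c) := by
    rw [hc, Finset.mul_sum, Finset.mul_sum, ← Finset.sum_sub_distrib, ← Finset.sum_add_distrib]
    apply Finset.sum_congr rfl; intro i _; ring
  rw [hexp] at hsq
  linarith

lemma sum_sq_zero_imp {n : ℕ} (v : Fin n → ℝ) (h : ∑ j, v j^2 ≤ 0) : v = 0 := by
  have h2 : ∑ j, v j^2 = 0 :=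
    le_antisymm h (Finset.sum_nonneg fun j _ => sq_nonneg _)
  funext j
  have := (Finset.sum_eq_zero_iff_of_nonneg (fun j _ => sq_nonneg (v j))).1 h2 j (Finset.mem_univ j)
  exact pow_eq_zero_iff (by norm_num) |>.1 this


set_option maxHeartbeats 2000000 in
/-- exact recovery of `K`-sparse signals by ROMP under the RIP of
order `3K` with `δ ≤ 0.13/√(log₂ K)`. -/
theorem stmt15 {M N K : ℕ} (Φ : Matrix (Fin M) (Fin N) ℝ) (δ : ℝ) (x : Fin N → ℝ)
    (hK : 2 ≤ K)
    (hRIP : RIP (3 * K) Φ δ) (hδ : δ ≤ 0.13 / Real.sqrt (Real.logb 2 K))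
    (hsp : (supp x).card ≤ K)
    (y : Fin M → ℝ) (hy : y = Φ.mulVec x)
    (Λ : ℕ → Finset (Fin N)) (xs : ℕ → Fin N → ℝ) (Ω : ℕ → Finset (Fin N))
    (Ω₀ : ℕ → Finset (Fin N))
    (hΛ0 : Λ 0 = ∅)
    -- least-squares update
    (hls : ∀ ℓ, supp (xs ℓ) ⊆ Λ ℓ ∧
      ∀ z : Fin N → ℝ, supp z ⊆ Λ ℓ →
        l2 (y - Φ.mulVec (xs ℓ)) ≤ l2 (y - Φ.mulVec z))
    -- Ω ℓ consists of the K largest-magnitude entries of h ℓ, or supp (h ℓ) if it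
    -- has fewer than K nonzero entries
    (hΩ : ∀ ℓ,
      ((K ≤ (supp (Φᵀ.mulVec (y - Φ.mulVec (xs ℓ)))).card ∧ (Ω ℓ).card = K ∧
          ∀ i ∈ Ω ℓ, ∀ j ∉ Ω ℓ,
            |(Φᵀ.mulVec (y - Φ.mulVec (xs ℓ))) j| ≤ |(Φᵀ.mulVec (y - Φ.mulVec (xs ℓ))) i|) ∨
        ((supp (Φᵀ.mulVec (y - Φ.mulVec (xs ℓ)))).card < K ∧
          Ω ℓ = supp (Φᵀ.mulVec (y - Φ.mulVec (xs ℓ))))))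
    -- Ω₀ ℓ is a regularized subset of Ω ℓ of maximal energy
    (hΩ₀ : ∀ ℓ, Ω₀ ℓ ⊆ Ω ℓ ∧
      (∀ i ∈ Ω₀ ℓ, ∀ j ∈ Ω₀ ℓ,
        |(Φᵀ.mulVec (y - Φ.mulVec (xs ℓ))) i| ≤ 2 * |(Φᵀ.mulVec (y - Φ.mulVec (xs ℓ))) j|) ∧
      ∀ Ω' ⊆ Ω ℓ, (∀ i ∈ Ω', ∀ j ∈ Ω',
          |(Φᵀ.mulVec (y - Φ.mulVec (xs ℓ))) i| ≤ 2 * |(Φᵀ.mulVec (y - Φ.mulVec (xs ℓ))) j|) →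
        l2 (restr Ω' (Φᵀ.mulVec (y - Φ.mulVec (xs ℓ)))) ≤
          l2 (restr (Ω₀ ℓ) (Φᵀ.mulVec (y - Φ.mulVec (xs ℓ)))))
    (hstep : ∀ ℓ, Λ (ℓ + 1) = Λ ℓ ∪ Ω₀ ℓ) :
    ∃ ℓ ≤ K, supp x ⊆ Λ ℓ ∧ xs ℓ = x := by
  classical
  have hδ0 : 0 < δ := hRIP.1
  have hδ1 : δ < 1 := hRIP.2.1
  set S := supp x with hSdef
  set L := Real.logb 2 K with hLdef
  have hL1 : 1 ≤ L := by
    rw [hLdef, show (1:ℝ) = Real.logb 2 2 from (Real.logb_self_eq_one (by norm_num)).symm]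
    apply Real.logb_le_logb_of_le (by norm_num) (by norm_num)
    exact_mod_cast hK
  have hL0 : 0 < L := lt_of_lt_of_le one_pos hL1
  have hsqrtL : 1 ≤ Real.sqrt L := by
    rw [show (1:ℝ) = Real.sqrt 1 from Real.sqrt_one.symm]
    exact Real.sqrt_le_sqrt hL1
  have hδ13 : δ ≤ 0.13 := le_trans hδ (div_le_self (by norm_num) hsqrtL)
  have hδ2 : δ^2 ≤ 0.0169/L := by
    have h2 : δ^2 ≤ (0.13/Real.sqrt L)^2 := pow_le_pow_left₀ hδ0.le hδ 2
    have h3 : (0.13/Real.sqrt L)^2 = 0.0169/L := by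
      rw [div_pow, Real.sq_sqrt hL0.le]; norm_num
    linarith
  -- main induction
  have main : ∀ ℓ, ℓ ≤ K → (∃ l' ≤ ℓ, supp x ⊆ Λ l' ∧ xs l' = x) ∨
      (3 * ((Λ ℓ) \ S).card ≤ ((Λ ℓ) ∩ S).card ∧ ℓ ≤ ((Λ ℓ) ∩ S).card) := by
    intro ℓ
    induction ℓ with
    | zero => intro _; right; rw [hΛ0]; simp
    | succ ℓ ih =>
      intro hlK
      rcases ih (by omega) with hdone | ⟨hb3, hla⟩
      · obtain ⟨l', hl', h1, h2⟩ := hdone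
        exact Or.inl ⟨l', by omega, h1, h2⟩
      by_cases hxv : xs ℓ = x
      · exact Or.inl ⟨ℓ, by omega, by rw [← hxv]; exact (hls ℓ).1, hxv⟩
      right
      -- setup
      set v := x - xs ℓ with hvdef
      have hvne : v ≠ 0 := sub_ne_zero.2 (Ne.symm hxv)
      set V := ∑ j, v j^2 with hVdef
      have hV0 : 0 < V := by
        have hj : ∃ j, v j ≠ 0 := by
          by_contra hc; push_neg at hc
          exact hvne (funext hc)
        obtain ⟨j, hj⟩ := hj
        have h1 : 0 < v j^2 := by positivity
        have h2 : v j^2 ≤ V :=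
          Finset.single_le_sum (fun i _ => sq_nonneg (v i)) (Finset.mem_univ j)
        linarith
      set h := Φᵀ.mulVec (Φ.mulVec v) with hhdef
      have hrw : Φᵀ.mulVec (y - Φ.mulVec (xs ℓ)) = h := by
        rw [hy, ← Matrix.mulVec_sub]
      have hΩℓ := hΩ ℓ
      have hΩ₀ℓ := hΩ₀ ℓ
      rw [hrw] at hΩℓ hΩ₀ℓ
      set a := ((Λ ℓ) ∩ S).card with hadef
      set b := ((Λ ℓ) \ S).card with hbdef
      have haK : a ≤ K := le_trans (Finset.card_le_card Finset.inter_subset_right) hsp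
      have hbK : b ≤ K := by omega
      have hsuppxs : supp (xs ℓ) ⊆ Λ ℓ := (hls ℓ).1
      set S' := supp v with hS'def
      have hS'sub : S' ⊆ Λ ℓ ∪ S := by
        rw [hS'def, hvdef]
        refine (supp_sub_union x (xs ℓ)).trans ?_
        rw [Finset.union_comm]
        exact Finset.union_subset_union hsuppxs (subset_refl _)
      have hcardΛS : (Λ ℓ ∪ S).card ≤ b + K := by
        have e1 : Λ ℓ ∪ S = (Λ ℓ \ S) ∪ S := by
          rw [Finset.sdiff_union_self_eq_union]
        rw [e1]
        exact le_trans (Finset.card_union_le _ _) (by omega)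
      have hS'card : S'.card ≤ b + K := le_trans (Finset.card_le_card hS'sub) hcardΛS
      -- orthogonality
      have horth : ∀ j ∈ Λ ℓ, h j = 0 := by
        intro j hj
        have := ls_orth Φ y (Λ ℓ) (xs ℓ) hsuppxs (fun z hz => (hls ℓ).2 z hz) j hj
        rwa [hrw] at this
      -- key bound: local approximation
      have hkey : ∀ T : Finset (Fin N), (T ∪ S').card ≤ 3*K →
          ∑ j ∈ T, (h j - v j)^2 ≤ δ^2 * V := by
        intro T hT
        exact key_bound hRIP v T hT
      -- lower bound on S'
      have hf5 : ∑ j ∈ S', (h j - v j)^2 ≤ δ^2 * V := by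
        apply hkey
        rw [Finset.union_self]
        omega
      have hVS' : ∑ j ∈ S', v j^2 = V := by
        rw [hVdef]
        apply Finset.sum_subset (Finset.subset_univ S')
        intro j _ hj
        rw [hS'def, mem_supp, not_not] at hj
        simp [hj]
      have hf6 : (1-δ)^2 * V ≤ ∑ j ∈ S', h j^2 := by
        set P := ∑ j ∈ S', h j^2 with hPdef
        set Q := ∑ j ∈ S', (v j - h j)^2 with hQdef
        have hPnn : 0 ≤ P := Finset.sum_nonneg fun j _ => sq_nonneg _
        have hQnn : 0 ≤ Q := Finset.sum_nonneg fun j _ => sq_nonneg _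
        have hQb : Q ≤ δ^2 * V := by
          rw [hQdef]
          calc ∑ j ∈ S', (v j - h j)^2 = ∑ j ∈ S', (h j - v j)^2 :=
              Finset.sum_congr rfl fun j _ => by ring
          _ ≤ δ^2 * V := hf5
        have htri : V ≤ (Real.sqrt P + Real.sqrt Q)^2 := by
          rw [← hVS']
          calc ∑ j ∈ S', v j^2 = ∑ j ∈ S', (h j + (v j - h j))^2 :=
              Finset.sum_congr rfl fun j _ => by ring
          _ ≤ _ := sum_sq_triangle S' h (fun j => v j - h j)
        have hsQ : Real.sqrt Q ≤ δ * Real.sqrt V := by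
          calc Real.sqrt Q ≤ Real.sqrt (δ^2 * V) := Real.sqrt_le_sqrt hQb
          _ = δ * Real.sqrt V := by
              rw [Real.sqrt_mul (sq_nonneg δ), Real.sqrt_sq hδ0.le]
        have hsV : Real.sqrt V ≤ Real.sqrt P + Real.sqrt Q := by
          calc Real.sqrt V ≤ Real.sqrt ((Real.sqrt P + Real.sqrt Q)^2) :=
              Real.sqrt_le_sqrt htri
          _ = Real.sqrt P + Real.sqrt Q := Real.sqrt_sq (by positivity)
        have hfin : (1-δ) * Real.sqrt V ≤ Real.sqrt P := by linarith
        have h1d : 0 ≤ (1-δ) * Real.sqrt V := by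
          apply mul_nonneg (by linarith) (Real.sqrt_nonneg _)
        have := pow_le_pow_left₀ h1d hfin 2
        rw [mul_pow, Real.sq_sqrt hV0.le, Real.sq_sqrt hPnn] at this
        exact this
      -- S' \ Λ ⊆ S \ Λ and orthogonality transfer
      have hS'L : S' \ Λ ℓ ⊆ S \ Λ ℓ := by
        intro j hj
        rw [Finset.mem_sdiff] at hj ⊢
        obtain ⟨hj1, hj2⟩ := hj
        refine ⟨?_, hj2⟩
        rw [hS'def, mem_supp] at hj1
        rw [hSdef, mem_supp]
        have hxs0 : xs ℓ j = 0 := by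
          by_contra hc
          exact hj2 (hsuppxs (mem_supp.2 hc))
        rw [hvdef] at hj1
        simp only [Pi.sub_apply, hxs0, sub_zero] at hj1
        exact hj1
      have hf7 : ∑ j ∈ S', h j^2 ≤ ∑ j ∈ S \ Λ ℓ, h j^2 := by
        have e1 := Finset.sum_inter_add_sum_sdiff S' (Λ ℓ) (fun j => h j^2)
        have e2 : ∑ j ∈ S' ∩ Λ ℓ, h j^2 = 0 := by
          apply Finset.sum_eq_zero
          intro j hj
          rw [horth j (Finset.mem_inter.1 hj).2]
          ring
        have e3 : ∑ j ∈ S' \ Λ ℓ, h j^2 ≤ ∑ j ∈ S \ Λ ℓ, h j^2 :=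
          Finset.sum_le_sum_of_subset_of_nonneg hS'L (fun j _ _ => sq_nonneg _)
        linarith
      -- Ω card and top-K property
      have hΩcard : (Ω ℓ).card ≤ K := by
        rcases hΩℓ with ⟨_, hc2, _⟩ | ⟨hc1, hc2⟩
        · omega
        · rw [hc2]; omega
      have hf8 : ∑ j ∈ S \ Λ ℓ, h j^2 ≤ ∑ j ∈ Ω ℓ, h j^2 := by
        rcases hΩℓ with ⟨hc1, hc2, hc3⟩ | ⟨hc1, hc2⟩
        · apply topK_sum h (Ω ℓ) (S \ Λ ℓ) _ hc3
          rw [hc2]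
          exact le_trans (Finset.card_le_card (Finset.sdiff_subset)) hsp
        · rw [hc2]
          have e1 := Finset.sum_inter_add_sum_sdiff (S \ Λ ℓ) (supp h) (fun j => h j^2)
          have e2 : ∑ j ∈ (S \ Λ ℓ) \ supp h, h j^2 = 0 := by
            apply Finset.sum_eq_zero
            intro j hj
            have := (Finset.mem_sdiff.1 hj).2
            rw [mem_supp, not_not] at this
            rw [this]; ring
          have e3 : ∑ j ∈ (S \ Λ ℓ) ∩ supp h, h j^2 ≤ ∑ j ∈ supp h, h j^2 :=
            Finset.sum_le_sum_of_subset_of_nonneg Finset.inter_subset_right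
              (fun j _ _ => sq_nonneg _)
          linarith
      -- bucket and maximality
      obtain ⟨B, hBsub, hBreg, hBbd⟩ := bucket hK h (Ω ℓ) hΩcard
      have hmaxB : ∑ j ∈ B, h j^2 ≤ ∑ j ∈ Ω₀ ℓ, h j^2 := by
        have := hΩ₀ℓ.2.2 B hBsub hBreg
        have h2 := pow_le_pow_left₀ (l2_nonneg _) this 2
        rwa [l2_restr_sq, l2_restr_sq] at h2
      have hf9 : 0.3/L * ((1-δ)^2 * V) ≤ ∑ j ∈ Ω₀ ℓ, h j^2 := by
        have e1 : 0.3/L * ((1-δ)^2*V) ≤ 0.3/L * ∑ j ∈ Ω ℓ, h j^2 := by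
          apply mul_le_mul_of_nonneg_left _ (by positivity)
          linarith
        linarith
      have hf11 : 0.22707 * V / L ≤ ∑ j ∈ Ω₀ ℓ, h j^2 := by
        have hd : (0.7569:ℝ) ≤ (1-δ)^2 := by nlinarith [sq_nonneg (1-δ-0.87)]
        have hd2 : (0.7569:ℝ)*V ≤ (1-δ)^2*V := mul_le_mul_of_nonneg_right hd hV0.le
        have e0 : (0.22707:ℝ)*V ≤ 0.3*((1-δ)^2*V) := by linarith
        have e1 : 0.22707 * V / L ≤ 0.3/L * ((1-δ)^2 * V) := by
          rw [show (0.3:ℝ)/L * ((1-δ)^2*V) = 0.3*((1-δ)^2*V)/L by ring]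
          exact (div_le_div_iff_of_pos_right hL0).2 e0
        linarith
      -- upper bound off the support
      have hf12 : ∑ j ∈ Ω₀ ℓ \ S', h j^2 ≤ 0.0169 * V / L := by
        have hcardT : ((Ω₀ ℓ \ S') ∪ S').card ≤ 3*K := by
          have e1 : ((Ω₀ ℓ \ S') ∪ S').card ≤ (Ω₀ ℓ \ S').card + S'.card :=
            Finset.card_union_le _ _
          have e2 : (Ω₀ ℓ \ S').card ≤ (Ω₀ ℓ).card := Finset.card_le_card Finset.sdiff_subset
          have e3 : (Ω₀ ℓ).card ≤ K := le_trans (Finset.card_le_card hΩ₀ℓ.1) hΩcard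
          omega
        have e4 : ∑ j ∈ Ω₀ ℓ \ S', h j^2 = ∑ j ∈ Ω₀ ℓ \ S', (h j - v j)^2 := by
          apply Finset.sum_congr rfl
          intro j hj
          have := (Finset.mem_sdiff.1 hj).2
          rw [hS'def, mem_supp, not_not] at this
          rw [this, sub_zero]
        have e5 := hkey (Ω₀ ℓ \ S') hcardT
        have e6 : δ^2 * V ≤ 0.0169/L * V :=
          mul_le_mul_of_nonneg_right hδ2 hV0.le
        rw [e4]
        calc ∑ j ∈ Ω₀ ℓ \ S', (h j - v j)^2 ≤ δ^2*V := e5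
        _ ≤ 0.0169/L*V := e6
        _ = 0.0169*V/L := by ring
      have hf13 : 0.21017 * V / L ≤ ∑ j ∈ Ω₀ ℓ ∩ S', h j^2 := by
        have e1 := Finset.sum_inter_add_sum_sdiff (Ω₀ ℓ) S' (fun j => h j^2)
        have : (0.22707:ℝ) * V / L - 0.0169 * V / L = 0.21017 * V / L := by ring
        linarith
      -- entries of h are nonzero on Ω₀
      have hVL0 : 0 < V / L := by positivity
      have hne0 : ∀ j ∈ Ω₀ ℓ, h j ≠ 0 := by
        intro j hj hj0
        have hzero : ∑ i ∈ Ω₀ ℓ, h i^2 = 0 := by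
          apply Finset.sum_eq_zero
          intro i hi
          have := hΩ₀ℓ.2.1 i hi j hj
          rw [hj0, abs_zero, mul_zero] at this
          have : h i = 0 := abs_nonpos_iff.1 this
          rw [this]; ring
        rw [hzero] at hf11
        have h9 : (0.22707:ℝ) * V / L = 0.22707*(V/L) := by ring
        rw [h9] at hf11
        linarith
      -- minimal entry
      have hΩ₀ne : (Ω₀ ℓ).Nonempty := by
        by_contra hc
        rw [Finset.not_nonempty_iff_eq_empty] at hc
        rw [hc] at hf11
        simp at hf11
        have h9 : (0.22707:ℝ) * V / L = 0.22707*(V/L) := by ring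
        rw [h9] at hf11
        linarith
      obtain ⟨j₀, hj₀mem, hj₀min⟩ := Finset.exists_min_image (Ω₀ ℓ) (fun i => |h i|) hΩ₀ne
      set msq := h j₀^2 with hmsqdef
      have hmsq0 : 0 < msq := by
        have := hne0 j₀ hj₀mem
        positivity
      set a' := (Ω₀ ℓ ∩ S').card with ha'def
      set b' := (Ω₀ ℓ \ S').card with hb'def
      have hf16 : ∑ j ∈ Ω₀ ℓ ∩ S', h j^2 ≤ (a' : ℝ) * (4 * msq) := by
        have hbnd : ∀ i ∈ Ω₀ ℓ ∩ S', h i^2 ≤ 4*msq := by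
          intro i hi
          have hiΩ₀ : i ∈ Ω₀ ℓ := (Finset.mem_inter.1 hi).1
          have h1 := hΩ₀ℓ.2.1 i hiΩ₀ j₀ hj₀mem
          have h2 : h i^2 ≤ (2*|h j₀|)^2 := by
            rw [← sq_abs (h i)]
            exact pow_le_pow_left₀ (abs_nonneg _) h1 2
          have h3 : (2*|h j₀|)^2 = 4*msq := by
            rw [mul_pow, sq_abs, hmsqdef]; ring
          linarith
        have := Finset.sum_le_card_nsmul (Ω₀ ℓ ∩ S') (fun j => h j^2) (4*msq) hbnd
        rwa [nsmul_eq_mul] at this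
      have hf17 : (b' : ℝ) * msq ≤ ∑ j ∈ Ω₀ ℓ \ S', h j^2 := by
        have hbnd : ∀ i ∈ Ω₀ ℓ \ S', msq ≤ h i^2 := by
          intro i hi
          have hiΩ₀ : i ∈ Ω₀ ℓ := (Finset.mem_sdiff.1 hi).1
          have h1 := hj₀min i hiΩ₀
          rw [← sq_abs (h i), hmsqdef, ← sq_abs (h j₀)]
          exact pow_le_pow_left₀ (abs_nonneg _) h1 2
        have := Finset.card_nsmul_le_sum (Ω₀ ℓ \ S') (fun j => h j^2) msq hbnd
        rwa [nsmul_eq_mul] at this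
      -- cardinality comparison
      have hcomp : 3 * b' < a' := by
        have e1 : (a':ℝ) * msq ≥ 0.21017/4 * (V/L) := by
          have : (0.21017:ℝ) * V / L = 0.21017 * (V/L) := by ring
          nlinarith
        have e2 : (b':ℝ) * msq ≤ 0.0169 * (V/L) := by
          have : (0.0169:ℝ) * V / L = 0.0169 * (V/L) := by ring
          nlinarith
        have e3 : 3*((b':ℝ) * msq) < (a':ℝ)*msq := by nlinarith
        have e4 : (3*(b':ℝ)) < (a':ℝ) := by
          by_contra hc
          push_neg at hc
          nlinarith
        exact_mod_cast e4
      have ha'1 : 1 ≤ a' := by omega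
      -- Ω₀ disjoint from Λ
      have hΩ₀Λ : ∀ j ∈ Ω₀ ℓ, j ∉ Λ ℓ := by
        intro j hj hjΛ
        exact hne0 j hj (horth j hjΛ)
      -- Ω₀ ∩ S' ⊆ S, Ω₀ \ S ⊆ Ω₀ \ S'
      have hΩ₀S'S : Ω₀ ℓ ∩ S' ⊆ S := by
        intro j hj
        rw [Finset.mem_inter] at hj
        have hjΛ : j ∉ Λ ℓ := hΩ₀Λ j hj.1
        have hxs0 : xs ℓ j = 0 := by
          by_contra hc
          exact hjΛ (hsuppxs (mem_supp.2 hc))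
        have := hj.2
        rw [hS'def, mem_supp, hvdef] at this
        simp only [Pi.sub_apply, hxs0, sub_zero] at this
        rw [hSdef, mem_supp]
        exact this
      have hΩ₀SS' : Ω₀ ℓ \ S ⊆ Ω₀ ℓ \ S' := by
        intro j hj
        rw [Finset.mem_sdiff] at hj ⊢
        refine ⟨hj.1, ?_⟩
        intro hjS'
        have hjΛ : j ∉ Λ ℓ := hΩ₀Λ j hj.1
        have hxs0 : xs ℓ j = 0 := by
          by_contra hc
          exact hjΛ (hsuppxs (mem_supp.2 hc))
        have hx0 : x j = 0 := by
          by_contra hc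
          exact hj.2 (mem_supp.2 hc)
        rw [hS'def, mem_supp, hvdef] at hjS'
        simp [Pi.sub_apply, hxs0, hx0] at hjS'
      -- now card counting for step ℓ+1
      rw [hstep ℓ]
      have hnew_a : a + a' ≤ ((Λ ℓ ∪ Ω₀ ℓ) ∩ S).card := by
        have hsub : (Λ ℓ ∩ S) ∪ (Ω₀ ℓ ∩ S') ⊆ (Λ ℓ ∪ Ω₀ ℓ) ∩ S := by
          intro j hj
          rw [Finset.mem_union] at hj
          rw [Finset.mem_inter, Finset.mem_union]
          rcases hj with hj | hj
          · rw [Finset.mem_inter] at hj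
            exact ⟨Or.inl hj.1, hj.2⟩
          · exact ⟨Or.inr (Finset.mem_inter.1 hj).1, hΩ₀S'S hj⟩
        have hdisj : Disjoint (Λ ℓ ∩ S) (Ω₀ ℓ ∩ S') := by
          rw [Finset.disjoint_left]
          intro j hj1 hj2
          exact hΩ₀Λ j (Finset.mem_inter.1 hj2).1 (Finset.mem_inter.1 hj1).1
        have e5 := Finset.card_union_of_disjoint hdisj
        have e6 := Finset.card_le_card hsub
        omega
      have hnew_b : ((Λ ℓ ∪ Ω₀ ℓ) \ S).card ≤ b + b' := by
        have e1 : (Λ ℓ ∪ Ω₀ ℓ) \ S = (Λ ℓ \ S) ∪ (Ω₀ ℓ \ S) := by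
          rw [Finset.union_sdiff_distrib]
        rw [e1]
        have e2 : (Ω₀ ℓ \ S).card ≤ b' := Finset.card_le_card hΩ₀SS'
        exact le_trans (Finset.card_union_le _ _) (by omega)
      constructor
      · omega
      · omega
  -- conclude
  rcases main K le_rfl with ⟨l', hl', h1, h2⟩ | ⟨hb3, hla⟩
  · exact ⟨l', hl', h1, h2⟩
  · -- S ⊆ Λ K and least squares forces equality
    have haS : S ⊆ Λ K := by
      have e1 : (Λ K ∩ S).card ≤ S.card := Finset.card_le_card Finset.inter_subset_right
      have e2 : S.card ≤ (Λ K ∩ S).card := by omega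
      have := Finset.eq_of_subset_of_card_le Finset.inter_subset_right e2
      rw [← this]
      exact Finset.inter_subset_left
    have hmin := (hls K).2 x haS
    have hl20 : l2 (y - Φ.mulVec x) = 0 := by
      rw [hy]
      simp [l2]
    have hr0 : l2 (y - Φ.mulVec (xs K)) = 0 :=
      le_antisymm (by rw [← hl20]; exact hmin) (l2_nonneg _)
    set v := x - xs K with hvdef
    have hrv : y - Φ.mulVec (xs K) = Φ.mulVec v := by
      rw [hy, ← Matrix.mulVec_sub]
    have hsuppv : supp v ⊆ Λ K ∪ S := by
      rw [hvdef]
      refine (supp_sub_union x (xs K)).trans ?_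
      rw [Finset.union_comm]
      exact Finset.union_subset_union (hls K).1 (subset_refl _)
    have hcardv : (supp v).card ≤ 3*K := by
      have e1 : Λ K ∪ S = Λ K := Finset.union_eq_left.2 haS
      have e2 : (Λ K).card ≤ 2*K := by
        have c1 := Finset.card_inter_add_card_sdiff (Λ K) S
        have c2 : (Λ K ∩ S).card ≤ K := le_trans (Finset.card_le_card Finset.inter_subset_right) hsp
        omega
      calc (supp v).card ≤ (Λ K ∪ S).card := Finset.card_le_card hsuppv
      _ = (Λ K).card := by rw [e1]
      _ ≤ 3*K := by omega
    have hripv := (hRIP.2.2 v hcardv).1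
    have hPhiv0 : l2 (Φ.mulVec v)^2 = 0 := by
      rw [← hrv, hr0]
      ring
    rw [hPhiv0] at hripv
    have hv0 : v = 0 := by
      apply sum_sq_zero_imp
      rw [← l2_sq]
      nlinarith [sq_nonneg (l2 v), hRIP.2.1, hRIP.1]
    have hxeq : xs K = x := by
      have : x - xs K = 0 := hv0
      have := sub_eq_zero.1 this
      exact this.symm
    exact ⟨K, le_rfl, haS, hxeq⟩


end OMP
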